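/- Let A and B be sets of n-dimensional dyadic boxes satisfying: (i) the universal box ⟨λ,…,λ⟩ does not belong to B; (ii) whenever two boxes of B are geometrically resolvable, their resolvent is contained in some box of A; (iii) no box of B is geometrically resolvable with any box derivable from A (in particular, with any box of A). Then r(A ∪ B) = r(A), where r(·) denotes the minimum number of resolution steps in a geometric resolution derivation containing the universal box ⟨λ,…,λ⟩ (and r(·) = ∞ if no such derivation exists). -/

import Mathlib

/-- An `n`-dimensional dyadic box: each component is a binary string (a dyadic
interval), the empty string denoting the whole domain `{0,1}^d`. -/
abbrev DyadicBox (n : ℕ) := Fin n → List Bool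

namespace DyadicBox

/-- `b'` contains `b` iff every component of `b'` is a prefix of the
corresponding component of `b`. -/
def Contains {n : ℕ} (b' b : DyadicBox n) : Prop := ∀ i, b' i <+: b i

/-- A point at bit depth `d`: every component has length exactly `d`. -/
def IsPoint {n : ℕ} (d : ℕ) (p : DyadicBox n) : Prop := ∀ i, (p i).length = d

/-- A set of boxes `A` covers a box `b` at bit depth `d`: every point lying in
`b` lies in some box of `A`. -/
def Covers {n : ℕ} (d : ℕ) (A : Set (DyadicBox n)) (b : DyadicBox n) : Prop :=
  ∀ p : DyadicBox n, IsPoint d p → Contains b p → ∃ a ∈ A, Contains a p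

/-- `w` is the geometric resolvent of `w₁` and `w₂` on coordinate `ℓ`:
the `ℓ`-th components are `x0` and `x1` and become `x`, and every other
component of `w` is the longer of the two (prefix-comparable) components. -/
def IsResolvent {n : ℕ} (w₁ w₂ : DyadicBox n) (ℓ : Fin n) (w : DyadicBox n) : Prop :=
  (∃ x : List Bool, w₁ ℓ = x ++ [false] ∧ w₂ ℓ = x ++ [true] ∧ w ℓ = x) ∧
  ∀ j : Fin n, j ≠ ℓ →
    (w₁ j <+: w₂ j ∧ w j = w₂ j) ∨ (w₂ j <+: w₁ j ∧ w j = w₁ j)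

/-- A (tagged) geometric resolution derivation from `A`: an entry tagged `true`
is the geometric resolvent of two earlier entries; an entry tagged `false` is
an axiom, i.e. belongs to `A`. -/
def IsDerivation {n : ℕ} (A : Set (DyadicBox n)) (L : List (Bool × DyadicBox n)) : Prop :=
  ∀ k : Fin L.length,
    if (L.get k).1 then
      ∃ i j : Fin L.length, (i : ℕ) < (k : ℕ) ∧ (j : ℕ) < (k : ℕ) ∧
        ∃ ℓ : Fin n, IsResolvent ((L.get i).2) ((L.get j).2) ℓ ((L.get k).2)
    else (L.get k).2 ∈ A

/-- The number of resolution steps of a derivation. -/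
def steps {n : ℕ} (L : List (Bool × DyadicBox n)) : ℕ := (L.filter (·.1)).length

/-- `z` is derivable from `A` by geometric resolutions: it occurs in some
geometric resolution derivation from `A`. -/
def Derivable {n : ℕ} (A : Set (DyadicBox n)) (z : DyadicBox n) : Prop :=
  ∃ L : List (Bool × DyadicBox n), IsDerivation A L ∧ z ∈ L.map (·.2)

end DyadicBox

namespace DyadicBox

lemma contains_refl {n} (b : DyadicBox n) : Contains b b := fun _ => List.prefix_refl _

lemma contains_trans {n} {a b c : DyadicBox n} (h1 : Contains a b) (h2 : Contains b c) :
    Contains a c := fun i => (h1 i).trans (h2 i)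

lemma resolvent_left {n} {z w₁ w₂ w : DyadicBox n} {ℓ : Fin n}
    (hz : Contains z w₁) (h : IsResolvent w₁ w₂ ℓ w) :
    Contains z w ∨ ∃ v, IsResolvent z w₂ ℓ v ∧ Contains v w := by
  classical
  obtain ⟨⟨x, h1, h2, h3⟩, hside⟩ := h
  have hmono : ∀ j, j ≠ ℓ → w₁ j <+: w j := by
    intro j hj
    rcases hside j hj with ⟨hp, he⟩ | ⟨_, he⟩
    · rw [he]; exact hp
    · rw [he]
  have hzl : z ℓ <+: x ++ [false] := h1 ▸ hz ℓ
  rcases List.prefix_concat_iff.mp hzl with heq | hpre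
  · right
    refine ⟨fun j => if j = ℓ then x else if w₂ j <+: z j then z j else w₂ j,
      ⟨⟨x, by simpa using heq, h2, by simp⟩, ?_⟩, ?_⟩
    · intro j hj
      simp only [if_neg hj]
      by_cases hc : w₂ j <+: z j
      · right; exact ⟨hc, by simp [hc]⟩
      · left
        have hcomp : z j <+: w₂ j := by
          rcases hside j hj with ⟨hp, _⟩ | ⟨hp, _⟩
          · exact (hz j).trans hp
          · rcases List.prefix_or_prefix_of_prefix (hz j) hp with h' | h'
            · exact h'
            · exact absurd h' hc
        exact ⟨hcomp, by simp [hc]⟩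
    · intro j
      by_cases hj : j = ℓ
      · subst hj; simp [h3]
      · simp only [if_neg hj]
        by_cases hc : w₂ j <+: z j
        · simp only [if_pos hc]
          rcases hside j hj with ⟨hp, he⟩ | ⟨_, he⟩
          · rw [he]; exact (hz j).trans hp
          · rw [he]; exact hz j
        · simp only [if_neg hc]
          rcases hside j hj with ⟨_, he⟩ | ⟨hp, he⟩
          · rw [he]
          · rw [he]; exact hp
  · left
    intro j
    by_cases hj : j = ℓ
    · subst hj; rw [h3]; exact hpre
    · exact (hz j).trans (hmono j hj)

lemma resolvent_right {n} {z₁ z₂ w₂ v : DyadicBox n} {ℓ : Fin n}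
    (hz : Contains z₂ w₂) (h : IsResolvent z₁ w₂ ℓ v) :
    Contains z₂ v ∨ ∃ u, IsResolvent z₁ z₂ ℓ u ∧ Contains u v := by
  classical
  obtain ⟨⟨x, h1, h2, h3⟩, hside⟩ := h
  have hmono : ∀ j, j ≠ ℓ → w₂ j <+: v j := by
    intro j hj
    rcases hside j hj with ⟨_, he⟩ | ⟨hp, he⟩
    · rw [he]
    · rw [he]; exact hp
  have hzl : z₂ ℓ <+: x ++ [true] := h2 ▸ hz ℓ
  rcases List.prefix_concat_iff.mp hzl with heq | hpre
  · right
    refine ⟨fun j => if j = ℓ then x else if z₂ j <+: z₁ j then z₁ j else z₂ j,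
      ⟨⟨x, h1, by simpa using heq, by simp⟩, ?_⟩, ?_⟩
    · intro j hj
      simp only [if_neg hj]
      by_cases hc : z₂ j <+: z₁ j
      · right; exact ⟨hc, by simp [hc]⟩
      · left
        have hcomp : z₁ j <+: z₂ j := by
          rcases hside j hj with ⟨hp, _⟩ | ⟨hp, _⟩
          · rcases List.prefix_or_prefix_of_prefix hp (hz j) with h' | h'
            · exact h'
            · exact absurd h' hc
          · exact absurd ((hz j).trans hp) hc
        exact ⟨hcomp, by simp [hc]⟩
    · intro j
      by_cases hj : j = ℓ
      · subst hj; simp [h3]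
      · simp only [if_neg hj]
        by_cases hc : z₂ j <+: z₁ j
        · simp only [if_pos hc]
          rcases hside j hj with ⟨hp, he⟩ | ⟨_, he⟩
          · rw [he]; exact hp
          · rw [he]
        · simp only [if_neg hc]
          exact (hz j).trans (hmono j hj)
  · left
    intro j
    by_cases hj : j = ℓ
    · subst hj; rw [h3]; exact hpre
    · exact (hz j).trans (hmono j hj)

lemma resolvent_mono {n} {z₁ z₂ w₁ w₂ w : DyadicBox n} {ℓ : Fin n}
    (h1 : Contains z₁ w₁) (h2 : Contains z₂ w₂) (h : IsResolvent w₁ w₂ ℓ w) :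
    Contains z₁ w ∨ Contains z₂ w ∨ ∃ u, IsResolvent z₁ z₂ ℓ u ∧ Contains u w := by
  rcases resolvent_left h1 h with hc | ⟨v, hv, hvw⟩
  · exact Or.inl hc
  rcases resolvent_right h2 hv with hc | ⟨u, hu, huv⟩
  · exact Or.inr (Or.inl (contains_trans hc hvw))
  · exact Or.inr (Or.inr ⟨u, hu, contains_trans huv hvw⟩)

lemma get_append_left {n} (L L' : List (Bool × DyadicBox n)) (i : ℕ) (h : i < L.length)
    (h' : i < (L ++ L').length) : (L ++ L').get ⟨i, h'⟩ = L.get ⟨i, h⟩ := by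
  simp [List.get_eq_getElem, List.getElem_append_left h]

lemma isDerivation_append_left {n} {S : Set (DyadicBox n)} {L L' : List (Bool × DyadicBox n)}
    (h : IsDerivation S (L ++ L')) : IsDerivation S L := by
  intro k
  have hk : (k : ℕ) < (L ++ L').length := by
    simp only [List.length_append]; omega
  have hg : (L ++ L').get ⟨k, hk⟩ = L.get k := get_append_left L L' k k.isLt hk
  have h' := h ⟨k, hk⟩
  rw [hg] at h'
  by_cases hb : (L.get k).1
  · rw [if_pos hb] at h' ⊢
    obtain ⟨i, j, hi, hj, ℓ, hres⟩ := h'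
    have hi' : (i : ℕ) < L.length := lt_trans hi k.isLt
    have hj' : (j : ℕ) < L.length := lt_trans hj k.isLt
    refine ⟨⟨i, hi'⟩, ⟨j, hj'⟩, hi, hj, ℓ, ?_⟩
    have e1 : (L ++ L').get i = L.get ⟨i, hi'⟩ := get_append_left L L' i hi' i.isLt
    have e2 : (L ++ L').get j = L.get ⟨j, hj'⟩ := get_append_left L L' j hj' j.isLt
    rw [e1, e2] at hres
    exact hres
  · rw [if_neg hb] at h' ⊢
    exact h'

lemma get_snoc_last {n} (M : List (Bool × DyadicBox n)) (e : Bool × DyadicBox n)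
    (h : M.length < (M ++ [e]).length) : (M ++ [e]).get ⟨M.length, h⟩ = e := by
  simp [List.get_eq_getElem]

lemma isDerivation_snoc {n} {S : Set (DyadicBox n)} {M : List (Bool × DyadicBox n)}
    (hM : IsDerivation S M) (e : Bool × DyadicBox n)
    (he : if e.1 then
        ∃ i j : Fin M.length, ∃ ℓ : Fin n, IsResolvent ((M.get i).2) ((M.get j).2) ℓ e.2
      else e.2 ∈ S) :
    IsDerivation S (M ++ [e]) := by
  intro k
  rcases Nat.lt_or_ge (k : ℕ) M.length with hk | hk
  · have hg : (M ++ [e]).get k = M.get ⟨k, hk⟩ := get_append_left M [e] k hk k.isLt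
    rw [hg]
    have h' := hM ⟨k, hk⟩
    by_cases hb : (M.get ⟨k, hk⟩).1
    · rw [if_pos hb] at h' ⊢
      obtain ⟨i, j, hi, hj, ℓ, hres⟩ := h'
      have hi' : (i : ℕ) < (M ++ [e]).length := by simp only [List.length_append]; omega
      have hj' : (j : ℕ) < (M ++ [e]).length := by simp only [List.length_append]; omega
      refine ⟨⟨i, hi'⟩, ⟨j, hj'⟩, hi, hj, ℓ, ?_⟩
      rw [get_append_left M [e] i i.isLt hi', get_append_left M [e] j j.isLt hj']
      exact hres
    · rw [if_neg hb] at h' ⊢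
      exact h'
  · have hkeq : (k : ℕ) = M.length := by
      have := k.isLt; simp only [List.length_append, List.length_singleton] at this; omega
    have hg : (M ++ [e]).get k = e := by
      have : k = ⟨M.length, by simp⟩ := Fin.ext hkeq
      rw [this]; exact get_snoc_last M e _
    rw [hg]
    by_cases hb : e.1
    · rw [if_pos hb] at he ⊢
      obtain ⟨i, j, ℓ, hres⟩ := he
      have hi' : (i : ℕ) < (M ++ [e]).length := by simp only [List.length_append]; omega
      have hj' : (j : ℕ) < (M ++ [e]).length := by simp only [List.length_append]; omega
      refine ⟨⟨i, hi'⟩, ⟨j, hj'⟩, by simp only [Fin.val_mk, hkeq]; exact i.isLt,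
        by simp only [Fin.val_mk, hkeq]; exact j.isLt, ℓ, ?_⟩
      rw [get_append_left M [e] i i.isLt hi', get_append_left M [e] j j.isLt hj']
      exact hres
    · rw [if_neg hb] at he ⊢
      exact he

lemma steps_snoc {n} (M : List (Bool × DyadicBox n)) (e : Bool × DyadicBox n) :
    steps (M ++ [e]) = steps M + (if e.1 then 1 else 0) := by
  simp only [steps, List.filter_append, List.length_append]
  by_cases hb : e.1 <;> simp [hb, List.filter]

lemma mem_map_of_mem_map_snoc {n} {M : List (Bool × DyadicBox n)} {e : Bool × DyadicBox n}
    {z : DyadicBox n} (h : z ∈ M.map (·.2)) : z ∈ (M ++ [e]).map (·.2) := by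
  simp only [List.map_append, List.mem_append]; exact Or.inl h

lemma exists_index_of_mem_map {n} {M : List (Bool × DyadicBox n)} {z : DyadicBox n}
    (h : z ∈ M.map (·.2)) : ∃ i : Fin M.length, (M.get i).2 = z := by
  obtain ⟨p, hp, hz⟩ := List.mem_map.mp h
  obtain ⟨i, hi⟩ := List.mem_iff_get.mp hp
  exact ⟨i, by rw [hi]; exact hz⟩

lemma prefix_concat_self_absurd {x : List Bool} {b : Bool} (h : x ++ [b] <+: x) : False := by
  have := h.length_le
  simp at this

lemma prop_lift {n} {B : Set (DyadicBox n)} {L M M' : List (Bool × DyadicBox n)}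
    {e : Bool × DyadicBox n}
    (hsub : ∀ z ∈ M.map (·.2), z ∈ M'.map (·.2))
    (hprop : ∀ w ∈ L.map (·.2), w ∈ B ∨ ∃ z ∈ M.map (·.2), Contains z w)
    (hnew : e.2 ∈ B ∨ ∃ z ∈ M'.map (·.2), Contains z e.2) :
    ∀ w ∈ (L ++ [e]).map (·.2), w ∈ B ∨ ∃ z ∈ M'.map (·.2), Contains z w := by
  intro w hw
  rw [List.map_append, List.mem_append] at hw
  rcases hw with hw | hw
  · rcases hprop w hw with h | ⟨z, hz, hc⟩
    · exact Or.inl h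
    · exact Or.inr ⟨z, hsub z hz, hc⟩
  · simp only [List.map_cons, List.map_nil, List.mem_singleton] at hw
    subst hw; exact hnew

lemma main_lemma {n} (A B : Set (DyadicBox n))
    (hBB : ∀ b₁ ∈ B, ∀ b₂ ∈ B, ∀ (ℓ : Fin n) (w : DyadicBox n),
      IsResolvent b₁ b₂ ℓ w → ∃ a ∈ A, Contains a w)
    (hBA : ∀ b ∈ B, ∀ z : DyadicBox n, Derivable A z →
      ∀ (ℓ : Fin n) (w : DyadicBox n), ¬ IsResolvent b z ℓ w ∧ ¬ IsResolvent z b ℓ w)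
    (L : List (Bool × DyadicBox n)) :
    IsDerivation (A ∪ B) L →
    ∃ M, IsDerivation A M ∧ steps M ≤ steps L ∧
      ∀ w ∈ L.map (·.2), w ∈ B ∨ ∃ z ∈ M.map (·.2), Contains z w := by
  induction L using List.reverseRecOn with
  | nil =>
      intro _
      exact ⟨[], fun k => absurd k.isLt (by simp), le_refl _, by simp⟩
  | append_singleton L e IH =>
      intro hder
      have hL : IsDerivation (A ∪ B) L := isDerivation_append_left hder
      obtain ⟨M, hM, hsteps, hprop⟩ := IH hL
      have hlen : L.length < (L ++ [e]).length := by simp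
      have hlast : (L ++ [e]).get ⟨L.length, hlen⟩ = e := get_snoc_last L e hlen
      have he := hder ⟨L.length, hlen⟩
      rw [hlast] at he
      by_cases hb : e.1
      · -- resolvent step
        rw [if_pos hb] at he
        obtain ⟨i, j, hi, hj, ℓ, hres⟩ := he
        have hstep : steps (L ++ [e]) = steps L + 1 := by rw [steps_snoc, if_pos hb]
        have hi' : (i : ℕ) < L.length := by simpa using hi
        have hj' : (j : ℕ) < L.length := by simpa using hj
        have e1 : (L ++ [e]).get i = L.get ⟨i, hi'⟩ := get_append_left L [e] i hi' i.isLt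
        have e2 : (L ++ [e]).get j = L.get ⟨j, hj'⟩ := get_append_left L [e] j hj' j.isLt
        rw [e1, e2] at hres
        set w₁ := (L.get ⟨i, hi'⟩).2 with hw₁
        set w₂ := (L.get ⟨j, hj'⟩).2 with hw₂
        have hw₁mem : w₁ ∈ L.map (·.2) :=
          List.mem_map.mpr ⟨L.get ⟨i, hi'⟩, List.get_mem _ _, rfl⟩
        have hw₂mem : w₂ ∈ L.map (·.2) :=
          List.mem_map.mpr ⟨L.get ⟨j, hj'⟩, List.get_mem _ _, rfl⟩
        rcases hprop w₁ hw₁mem with h1 | ⟨z₁, hz₁mem, hz₁⟩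
        · rcases hprop w₂ hw₂mem with h2 | ⟨z₂, hz₂mem, hz₂⟩
          · -- both in B
            obtain ⟨a, haA, hac⟩ := hBB w₁ h1 w₂ h2 ℓ e.2 hres
            refine ⟨M ++ [(false, a)], isDerivation_snoc hM _ (by simpa using haA), ?_, ?_⟩
            · rw [steps_snoc]; simp; omega
            · refine prop_lift (fun z hz => mem_map_of_mem_map_snoc hz) hprop ?_
              exact Or.inr ⟨a, by simp, hac⟩
          · -- w₁ ∈ B, z₂ contains w₂
            rcases resolvent_mono (contains_refl w₁) hz₂ hres with hc | hc | ⟨u, hu, _⟩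
            · exfalso
              obtain ⟨x, hx1, _, hx3⟩ := hres.1
              have := hc ℓ
              rw [hx1, hx3] at this
              exact prefix_concat_self_absurd this
            · exact ⟨M, hM, by omega, prop_lift (fun z hz => hz) hprop (Or.inr ⟨z₂, hz₂mem, hc⟩)⟩
            · exact absurd hu (hBA w₁ h1 z₂ ⟨M, hM, hz₂mem⟩ ℓ u).1
        · rcases hprop w₂ hw₂mem with h2 | ⟨z₂, hz₂mem, hz₂⟩
          · -- w₂ ∈ B, z₁ contains w₁
            rcases resolvent_mono hz₁ (contains_refl w₂) hres with hc | hc | ⟨u, hu, _⟩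
            · exact ⟨M, hM, by omega, prop_lift (fun z hz => hz) hprop (Or.inr ⟨z₁, hz₁mem, hc⟩)⟩
            · exfalso
              obtain ⟨x, _, hx2, hx3⟩ := hres.1
              have := hc ℓ
              rw [hx2, hx3] at this
              exact prefix_concat_self_absurd this
            · exact absurd hu (hBA w₂ h2 z₁ ⟨M, hM, hz₁mem⟩ ℓ u).2
          · -- both have containing derivable boxes
            rcases resolvent_mono hz₁ hz₂ hres with hc | hc | ⟨u, hu, huc⟩
            · exact ⟨M, hM, by omega, prop_lift (fun z hz => hz) hprop (Or.inr ⟨z₁, hz₁mem, hc⟩)⟩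
            · exact ⟨M, hM, by omega, prop_lift (fun z hz => hz) hprop (Or.inr ⟨z₂, hz₂mem, hc⟩)⟩
            · obtain ⟨i₁, hi₁⟩ := exists_index_of_mem_map hz₁mem
              obtain ⟨i₂, hi₂⟩ := exists_index_of_mem_map hz₂mem
              refine ⟨M ++ [(true, u)],
                isDerivation_snoc hM _ (by
                  simp only [if_pos]
                  exact ⟨i₁, i₂, ℓ, by rw [hi₁, hi₂]; exact hu⟩), ?_, ?_⟩
              · rw [steps_snoc]; simp; omega
              · exact prop_lift (fun z hz => mem_map_of_mem_map_snoc hz) hprop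
                  (Or.inr ⟨u, by simp, huc⟩)
      · -- axiom step
        rw [if_neg hb] at he
        have hstep : steps (L ++ [e]) = steps L := by rw [steps_snoc, if_neg hb]; simp
        rcases he with hA | hBmem
        · refine ⟨M ++ [(false, e.2)], isDerivation_snoc hM _ (by simpa using hA), ?_, ?_⟩
          · rw [steps_snoc]; simp; omega
          · exact prop_lift (fun z hz => mem_map_of_mem_map_snoc hz) hprop
              (Or.inr ⟨e.2, by simp, contains_refl _⟩)
        · exact ⟨M, hM, by omega, prop_lift (fun z hz => hz) hprop (Or.inl hBmem)⟩


lemma isDerivation_mono {n} {S T : Set (DyadicBox n)} (hST : S ⊆ T)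
    {L : List (Bool × DyadicBox n)} (h : IsDerivation S L) : IsDerivation T L := by
  intro k
  have hk := h k
  by_cases hb : (L.get k).1
  · rwa [if_pos hb] at hk ⊢
  · rw [if_neg hb] at hk ⊢; exact hST hk

end DyadicBox

/-- The minimum number of resolution steps of a geometric resolution derivation
from `A` containing the universal box `⟨λ,…,λ⟩`, or `⊤` if there is none. -/
noncomputable def resNum (n : ℕ) (A : Set (DyadicBox n)) : ℕ∞ :=
  sInf ((fun L => ((DyadicBox.steps L : ℕ) : ℕ∞)) ''
    {L : List (Bool × DyadicBox n) |
      DyadicBox.IsDerivation A L ∧ (fun _ : Fin n => ([] : List Bool)) ∈ L.map (·.2)})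

/-- If (i) the universal box is not in `B`, (ii) every resolvent of two boxes of
`B` is contained in some box of `A`, and (iii) no box of `B` is resolvable with
any box derivable from `A`, then `r(A ∪ B) = r(A)`. -/
theorem resNum_union_eq (n : ℕ) (A B : Set (DyadicBox n))
    (hB : (fun _ : Fin n => ([] : List Bool)) ∉ B)
    (hBB : ∀ b₁ ∈ B, ∀ b₂ ∈ B, ∀ (ℓ : Fin n) (w : DyadicBox n),
      DyadicBox.IsResolvent b₁ b₂ ℓ w → ∃ a ∈ A, DyadicBox.Contains a w)
    (hBA : ∀ b ∈ B, ∀ z : DyadicBox n, DyadicBox.Derivable A z →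
      ∀ (ℓ : Fin n) (w : DyadicBox n),
        ¬ DyadicBox.IsResolvent b z ℓ w ∧ ¬ DyadicBox.IsResolvent z b ℓ w) :
    resNum n (A ∪ B) = resNum n A := by
  apply le_antisymm
  · apply le_sInf
    rintro c ⟨L, ⟨hLd, hLmem⟩, rfl⟩
    exact sInf_le ⟨L, ⟨DyadicBox.isDerivation_mono Set.subset_union_left hLd, hLmem⟩, rfl⟩
  · apply le_sInf
    rintro c ⟨L, ⟨hLd, hLmem⟩, rfl⟩
    obtain ⟨M, hM, hsteps, hprop⟩ := DyadicBox.main_lemma A B hBB hBA L hLd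
    have huniv : (fun _ : Fin n => ([] : List Bool)) ∈ M.map (·.2) := by
      rcases hprop _ hLmem with h | ⟨z, hz, hc⟩
      · exact absurd h hB
      · have hzeq : z = fun _ => [] := funext fun i => List.prefix_nil.mp (hc i)
        rwa [hzeq] at hz
    refine le_trans (sInf_le ⟨M, ⟨hM, huniv⟩, rfl⟩) ?_
    simp only []
    exact_mod_cast hsteps
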